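/- Let T_1, T_2, T_3 be the Crabb–Davie 8×8 complex matrices, viewed as operators on the Hilbert space ℂ⁸. Then the triple (T_1, T_2, T_3) is extremal: for every complex Hilbert space M and all bounded linear operators A_i : M → ℂ⁸ and B_i : M → M (i = 1, 2, 3) such that the block operators X_i on ℂ⁸ ⊕ M defined by X_i (h, m) = (T_i h + A_i m, B_i m) are contractions and pairwise commute, one has A_1 = A_2 = A_3 = 0. -/
import Mathlib


open ContinuousLinearMap in
/-- The block operator `X (h, m) = (T h + A m, B m)` on the Hilbert direct sum `H ⊕₂ M`. -/
noncomputable def blockOp {H M : Type*} [NormedAddCommGroup H] [InnerProductSpace ℂ H]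
    [NormedAddCommGroup M] [InnerProductSpace ℂ M]
    (T : H →L[ℂ] H) (A : M →L[ℂ] H) (B : M →L[ℂ] M) :
    WithLp 2 (H × M) →L[ℂ] WithLp 2 (H × M) :=
  ((WithLp.prodContinuousLinearEquiv 2 ℂ H M).symm : H × M →L[ℂ] WithLp 2 (H × M)) ∘L
    ((T ∘L fst ℂ H M + A ∘L snd ℂ H M).prod (B ∘L snd ℂ H M)) ∘L
    ((WithLp.prodContinuousLinearEquiv 2 ℂ H M) : WithLp 2 (H × M) →L[ℂ] H × M)

/-- A tuple of commuting contractions is extremal if every block extension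
`X_i (h, m) = (T_i h + A_i m, B_i m)` by commuting contractions has `A_i = 0` for all `i`. -/
def IsExtremal {n : ℕ} {H : Type*} [NormedAddCommGroup H] [InnerProductSpace ℂ H]
    [CompleteSpace H] (T : Fin n → H →L[ℂ] H) : Prop :=
  ∀ (M : Type*) [NormedAddCommGroup M] [InnerProductSpace ℂ M] [CompleteSpace M],
    ∀ (A : Fin n → M →L[ℂ] H) (B : Fin n → M →L[ℂ] M),
      (∀ i, ‖blockOp (T i) (A i) (B i)‖ ≤ 1) →
      (∀ i j, blockOp (T i) (A i) (B i) ∘L blockOp (T j) (A j) (B j)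
            = blockOp (T j) (A j) (B j) ∘L blockOp (T i) (A i) (B i)) →
      ∀ i, A i = 0

open Matrix

/-- Kronecker delta on `Fin 3`. -/
def kd (i j : Fin 3) : ℂ := if i = j then 1 else 0

/-- The Crabb–Davie `8×8` matrices (rows and columns indexed `0,…,7`
corresponding to `1,…,8` in the paper). -/
def cdMatrix (i : Fin 3) : Matrix (Fin 8) (Fin 8) ℂ :=
  !![0,      0,       0,       0,       0,      0,      0,      0;
     kd i 0, 0,       0,       0,       0,      0,      0,      0;
     kd i 1, 0,       0,       0,       0,      0,      0,      0;
     kd i 2, 0,       0,       0,       0,      0,      0,      0;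
     0,     -kd i 0,  kd i 2,  kd i 1,  0,      0,      0,      0;
     0,      kd i 2, -kd i 1,  kd i 0,  0,      0,      0,      0;
     0,      kd i 1,  kd i 0, -kd i 2,  0,      0,      0,      0;
     0,      0,       0,       0,       kd i 0, kd i 1, kd i 2, 0]


section Aux

variable {H M : Type*} [NormedAddCommGroup H] [InnerProductSpace ℂ H]
  [NormedAddCommGroup M] [InnerProductSpace ℂ M]

local notation "⟪" x ", " y "⟫" => inner (𝕜 := ℂ) x y

lemma blockOp_apply' (T : H →L[ℂ] H) (A : M →L[ℂ] H) (B : M →L[ℂ] M) (h : H) (m : M) :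
    blockOp T A B ((WithLp.equiv 2 (H × M)).symm (h, m)) =
      (WithLp.equiv 2 (H × M)).symm (T h + A m, B m) := rfl

omit [InnerProductSpace ℂ H] [InnerProductSpace ℂ M] in
lemma norm_symm_sq (a : H) (b : M) :
    ‖(WithLp.equiv 2 (H × M)).symm (a, b)‖ ^ 2 = ‖a‖ ^ 2 + ‖b‖ ^ 2 := by
  rw [WithLp.prod_norm_sq_eq_of_L2]; rfl

lemma contraction_inner_zero (T : H →L[ℂ] H) (A : M →L[ℂ] H) (B : M →L[ℂ] M)
    (hX : ‖blockOp T A B‖ ≤ 1) (h : H) (hh : ‖T h‖ = ‖h‖) (m : M) :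
    ⟪T h, A m⟫ = 0 := by
  set z : ℂ := ⟪T h, A m⟫ with hz
  have key : ∀ c : ℂ, 2 * Complex.re (starRingEnd ℂ c * z) ≤ ‖m‖ ^ 2 := by
    intro c
    have h1 : ‖blockOp T A B ((WithLp.equiv 2 (H × M)).symm (c • h, m))‖
        ≤ ‖(WithLp.equiv 2 (H × M)).symm (c • h, m)‖ := by
      simpa using (blockOp T A B).le_of_opNorm_le hX _
    rw [blockOp_apply'] at h1
    have h3 : ‖T (c • h) + A m‖ ^ 2 + ‖B m‖ ^ 2 ≤ ‖c • h‖ ^ 2 + ‖m‖ ^ 2 := by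
      rw [← norm_symm_sq, ← norm_symm_sq]
      exact pow_le_pow_left₀ (norm_nonneg _) h1 2
    have h4 : ‖T (c • h) + A m‖ ^ 2 =
        ‖c • T h‖ ^ 2 + 2 * Complex.re ⟪c • T h, A m⟫ + ‖A m‖ ^ 2 := by
      rw [_root_.map_smul]; exact norm_add_sq (𝕜 := ℂ) _ _
    have h5 : ‖c • T h‖ = ‖c • h‖ := by simp [norm_smul, hh]
    have h6 : ⟪c • T h, A m⟫ = starRingEnd ℂ c * z := by rw [inner_smul_left]
    rw [h6, h5] at h4
    nlinarith [sq_nonneg ‖A m‖, sq_nonneg ‖B m‖]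
  by_contra hzne
  have hzpos : 0 < Complex.normSq z := by simpa [Complex.normSq_pos] using hzne
  have hk := key (((‖m‖ ^ 2 + 1) / Complex.normSq z : ℝ) * z)
  have hconj : starRingEnd ℂ ((((‖m‖ ^ 2 + 1) / Complex.normSq z : ℝ) : ℂ) * z) * z
      = (((‖m‖ ^ 2 + 1) / Complex.normSq z : ℝ) : ℂ) * Complex.normSq z := by
    rw [_root_.map_mul, Complex.conj_ofReal, mul_assoc, ← Complex.normSq_eq_conj_mul_self]
  rw [hconj] at hk
  have hre : Complex.re ((((‖m‖ ^ 2 + 1) / Complex.normSq z : ℝ) : ℂ) *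
      (Complex.normSq z : ℂ)) = ‖m‖ ^ 2 + 1 := by
    rw [← Complex.ofReal_mul, Complex.ofReal_re, div_mul_cancel₀]
    exact ne_of_gt hzpos
  rw [hre] at hk
  nlinarith [sq_nonneg ‖m‖]

end Aux

@[simp] lemma cdE_0_0_0 : cdMatrix 0 0 0 = 0 := by
  norm_num [show cdMatrix 0 0 0 = (0 : ℂ) from rfl, kd] <;> decide
@[simp] lemma cdE_0_0_1 : cdMatrix 0 0 1 = 0 := by
  norm_num [show cdMatrix 0 0 1 = (0 : ℂ) from rfl, kd] <;> decide
@[simp] lemma cdE_0_0_2 : cdMatrix 0 0 2 = 0 := by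
  norm_num [show cdMatrix 0 0 2 = (0 : ℂ) from rfl, kd] <;> decide
@[simp] lemma cdE_0_0_3 : cdMatrix 0 0 3 = 0 := by
  norm_num [show cdMatrix 0 0 3 = (0 : ℂ) from rfl, kd] <;> decide
@[simp] lemma cdE_0_0_4 : cdMatrix 0 0 4 = 0 := by
  norm_num [show cdMatrix 0 0 4 = (0 : ℂ) from rfl, kd] <;> decide
@[simp] lemma cdE_0_0_5 : cdMatrix 0 0 5 = 0 := by
  norm_num [show cdMatrix 0 0 5 = (0 : ℂ) from rfl, kd] <;> decide
@[simp] lemma cdE_0_0_6 : cdMatrix 0 0 6 = 0 := by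
  norm_num [show cdMatrix 0 0 6 = (0 : ℂ) from rfl, kd] <;> decide
@[simp] lemma cdE_0_0_7 : cdMatrix 0 0 7 = 0 := by
  norm_num [show cdMatrix 0 0 7 = (0 : ℂ) from rfl, kd] <;> decide
@[simp] lemma cdE_0_1_0 : cdMatrix 0 1 0 = 1 := by
  norm_num [show cdMatrix 0 1 0 = (kd 0 0 : ℂ) from rfl, kd] <;> decide
@[simp] lemma cdE_0_1_1 : cdMatrix 0 1 1 = 0 := by
  norm_num [show cdMatrix 0 1 1 = (0 : ℂ) from rfl, kd] <;> decide
@[simp] lemma cdE_0_1_2 : cdMatrix 0 1 2 = 0 := by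
  norm_num [show cdMatrix 0 1 2 = (0 : ℂ) from rfl, kd] <;> decide
@[simp] lemma cdE_0_1_3 : cdMatrix 0 1 3 = 0 := by
  norm_num [show cdMatrix 0 1 3 = (0 : ℂ) from rfl, kd] <;> decide
@[simp] lemma cdE_0_1_4 : cdMatrix 0 1 4 = 0 := by
  norm_num [show cdMatrix 0 1 4 = (0 : ℂ) from rfl, kd] <;> decide
@[simp] lemma cdE_0_1_5 : cdMatrix 0 1 5 = 0 := by
  norm_num [show cdMatrix 0 1 5 = (0 : ℂ) from rfl, kd] <;> decide
@[simp] lemma cdE_0_1_6 : cdMatrix 0 1 6 = 0 := by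
  norm_num [show cdMatrix 0 1 6 = (0 : ℂ) from rfl, kd] <;> decide
@[simp] lemma cdE_0_1_7 : cdMatrix 0 1 7 = 0 := by
  norm_num [show cdMatrix 0 1 7 = (0 : ℂ) from rfl, kd] <;> decide
@[simp] lemma cdE_0_2_0 : cdMatrix 0 2 0 = 0 := by
  norm_num [show cdMatrix 0 2 0 = (kd 0 1 : ℂ) from rfl, kd] <;> decide
@[simp] lemma cdE_0_2_1 : cdMatrix 0 2 1 = 0 := by
  norm_num [show cdMatrix 0 2 1 = (0 : ℂ) from rfl, kd] <;> decide
@[simp] lemma cdE_0_2_2 : cdMatrix 0 2 2 = 0 := by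
  norm_num [show cdMatrix 0 2 2 = (0 : ℂ) from rfl, kd] <;> decide
@[simp] lemma cdE_0_2_3 : cdMatrix 0 2 3 = 0 := by
  norm_num [show cdMatrix 0 2 3 = (0 : ℂ) from rfl, kd] <;> decide
@[simp] lemma cdE_0_2_4 : cdMatrix 0 2 4 = 0 := by
  norm_num [show cdMatrix 0 2 4 = (0 : ℂ) from rfl, kd] <;> decide
@[simp] lemma cdE_0_2_5 : cdMatrix 0 2 5 = 0 := by
  norm_num [show cdMatrix 0 2 5 = (0 : ℂ) from rfl, kd] <;> decide
@[simp] lemma cdE_0_2_6 : cdMatrix 0 2 6 = 0 := by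
  norm_num [show cdMatrix 0 2 6 = (0 : ℂ) from rfl, kd] <;> decide
@[simp] lemma cdE_0_2_7 : cdMatrix 0 2 7 = 0 := by
  norm_num [show cdMatrix 0 2 7 = (0 : ℂ) from rfl, kd] <;> decide
@[simp] lemma cdE_0_3_0 : cdMatrix 0 3 0 = 0 := by
  norm_num [show cdMatrix 0 3 0 = (kd 0 2 : ℂ) from rfl, kd] <;> decide
@[simp] lemma cdE_0_3_1 : cdMatrix 0 3 1 = 0 := by
  norm_num [show cdMatrix 0 3 1 = (0 : ℂ) from rfl, kd] <;> decide
@[simp] lemma cdE_0_3_2 : cdMatrix 0 3 2 = 0 := by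
  norm_num [show cdMatrix 0 3 2 = (0 : ℂ) from rfl, kd] <;> decide
@[simp] lemma cdE_0_3_3 : cdMatrix 0 3 3 = 0 := by
  norm_num [show cdMatrix 0 3 3 = (0 : ℂ) from rfl, kd] <;> decide
@[simp] lemma cdE_0_3_4 : cdMatrix 0 3 4 = 0 := by
  norm_num [show cdMatrix 0 3 4 = (0 : ℂ) from rfl, kd] <;> decide
@[simp] lemma cdE_0_3_5 : cdMatrix 0 3 5 = 0 := by
  norm_num [show cdMatrix 0 3 5 = (0 : ℂ) from rfl, kd] <;> decide
@[simp] lemma cdE_0_3_6 : cdMatrix 0 3 6 = 0 := by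
  norm_num [show cdMatrix 0 3 6 = (0 : ℂ) from rfl, kd] <;> decide
@[simp] lemma cdE_0_3_7 : cdMatrix 0 3 7 = 0 := by
  norm_num [show cdMatrix 0 3 7 = (0 : ℂ) from rfl, kd] <;> decide
@[simp] lemma cdE_0_4_0 : cdMatrix 0 4 0 = 0 := by
  norm_num [show cdMatrix 0 4 0 = (0 : ℂ) from rfl, kd] <;> decide
@[simp] lemma cdE_0_4_1 : cdMatrix 0 4 1 = (-1) := by
  norm_num [show cdMatrix 0 4 1 = (-kd 0 0 : ℂ) from rfl, kd] <;> decide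
@[simp] lemma cdE_0_4_2 : cdMatrix 0 4 2 = 0 := by
  norm_num [show cdMatrix 0 4 2 = (kd 0 2 : ℂ) from rfl, kd] <;> decide
@[simp] lemma cdE_0_4_3 : cdMatrix 0 4 3 = 0 := by
  norm_num [show cdMatrix 0 4 3 = (kd 0 1 : ℂ) from rfl, kd] <;> decide
@[simp] lemma cdE_0_4_4 : cdMatrix 0 4 4 = 0 := by
  norm_num [show cdMatrix 0 4 4 = (0 : ℂ) from rfl, kd] <;> decide
@[simp] lemma cdE_0_4_5 : cdMatrix 0 4 5 = 0 := by
  norm_num [show cdMatrix 0 4 5 = (0 : ℂ) from rfl, kd] <;> decide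
@[simp] lemma cdE_0_4_6 : cdMatrix 0 4 6 = 0 := by
  norm_num [show cdMatrix 0 4 6 = (0 : ℂ) from rfl, kd] <;> decide
@[simp] lemma cdE_0_4_7 : cdMatrix 0 4 7 = 0 := by
  norm_num [show cdMatrix 0 4 7 = (0 : ℂ) from rfl, kd] <;> decide
@[simp] lemma cdE_0_5_0 : cdMatrix 0 5 0 = 0 := by
  norm_num [show cdMatrix 0 5 0 = (0 : ℂ) from rfl, kd] <;> decide
@[simp] lemma cdE_0_5_1 : cdMatrix 0 5 1 = 0 := by
  norm_num [show cdMatrix 0 5 1 = (kd 0 2 : ℂ) from rfl, kd] <;> decide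
@[simp] lemma cdE_0_5_2 : cdMatrix 0 5 2 = 0 := by
  norm_num [show cdMatrix 0 5 2 = (-kd 0 1 : ℂ) from rfl, kd] <;> decide
@[simp] lemma cdE_0_5_3 : cdMatrix 0 5 3 = 1 := by
  norm_num [show cdMatrix 0 5 3 = (kd 0 0 : ℂ) from rfl, kd] <;> decide
@[simp] lemma cdE_0_5_4 : cdMatrix 0 5 4 = 0 := by
  norm_num [show cdMatrix 0 5 4 = (0 : ℂ) from rfl, kd] <;> decide
@[simp] lemma cdE_0_5_5 : cdMatrix 0 5 5 = 0 := by
  norm_num [show cdMatrix 0 5 5 = (0 : ℂ) from rfl, kd] <;> decide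
@[simp] lemma cdE_0_5_6 : cdMatrix 0 5 6 = 0 := by
  norm_num [show cdMatrix 0 5 6 = (0 : ℂ) from rfl, kd] <;> decide
@[simp] lemma cdE_0_5_7 : cdMatrix 0 5 7 = 0 := by
  norm_num [show cdMatrix 0 5 7 = (0 : ℂ) from rfl, kd] <;> decide
@[simp] lemma cdE_0_6_0 : cdMatrix 0 6 0 = 0 := by
  norm_num [show cdMatrix 0 6 0 = (0 : ℂ) from rfl, kd] <;> decide
@[simp] lemma cdE_0_6_1 : cdMatrix 0 6 1 = 0 := by
  norm_num [show cdMatrix 0 6 1 = (kd 0 1 : ℂ) from rfl, kd] <;> decide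
@[simp] lemma cdE_0_6_2 : cdMatrix 0 6 2 = 1 := by
  norm_num [show cdMatrix 0 6 2 = (kd 0 0 : ℂ) from rfl, kd] <;> decide
@[simp] lemma cdE_0_6_3 : cdMatrix 0 6 3 = 0 := by
  norm_num [show cdMatrix 0 6 3 = (-kd 0 2 : ℂ) from rfl, kd] <;> decide
@[simp] lemma cdE_0_6_4 : cdMatrix 0 6 4 = 0 := by
  norm_num [show cdMatrix 0 6 4 = (0 : ℂ) from rfl, kd] <;> decide
@[simp] lemma cdE_0_6_5 : cdMatrix 0 6 5 = 0 := by
  norm_num [show cdMatrix 0 6 5 = (0 : ℂ) from rfl, kd] <;> decide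
@[simp] lemma cdE_0_6_6 : cdMatrix 0 6 6 = 0 := by
  norm_num [show cdMatrix 0 6 6 = (0 : ℂ) from rfl, kd] <;> decide
@[simp] lemma cdE_0_6_7 : cdMatrix 0 6 7 = 0 := by
  norm_num [show cdMatrix 0 6 7 = (0 : ℂ) from rfl, kd] <;> decide
@[simp] lemma cdE_0_7_0 : cdMatrix 0 7 0 = 0 := by
  norm_num [show cdMatrix 0 7 0 = (0 : ℂ) from rfl, kd] <;> decide
@[simp] lemma cdE_0_7_1 : cdMatrix 0 7 1 = 0 := by
  norm_num [show cdMatrix 0 7 1 = (0 : ℂ) from rfl, kd] <;> decide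
@[simp] lemma cdE_0_7_2 : cdMatrix 0 7 2 = 0 := by
  norm_num [show cdMatrix 0 7 2 = (0 : ℂ) from rfl, kd] <;> decide
@[simp] lemma cdE_0_7_3 : cdMatrix 0 7 3 = 0 := by
  norm_num [show cdMatrix 0 7 3 = (0 : ℂ) from rfl, kd] <;> decide
@[simp] lemma cdE_0_7_4 : cdMatrix 0 7 4 = 1 := by
  norm_num [show cdMatrix 0 7 4 = (kd 0 0 : ℂ) from rfl, kd] <;> decide
@[simp] lemma cdE_0_7_5 : cdMatrix 0 7 5 = 0 := by
  norm_num [show cdMatrix 0 7 5 = (kd 0 1 : ℂ) from rfl, kd] <;> decide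
@[simp] lemma cdE_0_7_6 : cdMatrix 0 7 6 = 0 := by
  norm_num [show cdMatrix 0 7 6 = (kd 0 2 : ℂ) from rfl, kd] <;> decide
@[simp] lemma cdE_0_7_7 : cdMatrix 0 7 7 = 0 := by
  norm_num [show cdMatrix 0 7 7 = (0 : ℂ) from rfl, kd] <;> decide
@[simp] lemma cdE_1_0_0 : cdMatrix 1 0 0 = 0 := by
  norm_num [show cdMatrix 1 0 0 = (0 : ℂ) from rfl, kd] <;> decide
@[simp] lemma cdE_1_0_1 : cdMatrix 1 0 1 = 0 := by
  norm_num [show cdMatrix 1 0 1 = (0 : ℂ) from rfl, kd] <;> decide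
@[simp] lemma cdE_1_0_2 : cdMatrix 1 0 2 = 0 := by
  norm_num [show cdMatrix 1 0 2 = (0 : ℂ) from rfl, kd] <;> decide
@[simp] lemma cdE_1_0_3 : cdMatrix 1 0 3 = 0 := by
  norm_num [show cdMatrix 1 0 3 = (0 : ℂ) from rfl, kd] <;> decide
@[simp] lemma cdE_1_0_4 : cdMatrix 1 0 4 = 0 := by
  norm_num [show cdMatrix 1 0 4 = (0 : ℂ) from rfl, kd] <;> decide
@[simp] lemma cdE_1_0_5 : cdMatrix 1 0 5 = 0 := by
  norm_num [show cdMatrix 1 0 5 = (0 : ℂ) from rfl, kd] <;> decide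
@[simp] lemma cdE_1_0_6 : cdMatrix 1 0 6 = 0 := by
  norm_num [show cdMatrix 1 0 6 = (0 : ℂ) from rfl, kd] <;> decide
@[simp] lemma cdE_1_0_7 : cdMatrix 1 0 7 = 0 := by
  norm_num [show cdMatrix 1 0 7 = (0 : ℂ) from rfl, kd] <;> decide
@[simp] lemma cdE_1_1_0 : cdMatrix 1 1 0 = 0 := by
  norm_num [show cdMatrix 1 1 0 = (kd 1 0 : ℂ) from rfl, kd] <;> decide
@[simp] lemma cdE_1_1_1 : cdMatrix 1 1 1 = 0 := by
  norm_num [show cdMatrix 1 1 1 = (0 : ℂ) from rfl, kd] <;> decide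
@[simp] lemma cdE_1_1_2 : cdMatrix 1 1 2 = 0 := by
  norm_num [show cdMatrix 1 1 2 = (0 : ℂ) from rfl, kd] <;> decide
@[simp] lemma cdE_1_1_3 : cdMatrix 1 1 3 = 0 := by
  norm_num [show cdMatrix 1 1 3 = (0 : ℂ) from rfl, kd] <;> decide
@[simp] lemma cdE_1_1_4 : cdMatrix 1 1 4 = 0 := by
  norm_num [show cdMatrix 1 1 4 = (0 : ℂ) from rfl, kd] <;> decide
@[simp] lemma cdE_1_1_5 : cdMatrix 1 1 5 = 0 := by
  norm_num [show cdMatrix 1 1 5 = (0 : ℂ) from rfl, kd] <;> decide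
@[simp] lemma cdE_1_1_6 : cdMatrix 1 1 6 = 0 := by
  norm_num [show cdMatrix 1 1 6 = (0 : ℂ) from rfl, kd] <;> decide
@[simp] lemma cdE_1_1_7 : cdMatrix 1 1 7 = 0 := by
  norm_num [show cdMatrix 1 1 7 = (0 : ℂ) from rfl, kd] <;> decide
@[simp] lemma cdE_1_2_0 : cdMatrix 1 2 0 = 1 := by
  norm_num [show cdMatrix 1 2 0 = (kd 1 1 : ℂ) from rfl, kd] <;> decide
@[simp] lemma cdE_1_2_1 : cdMatrix 1 2 1 = 0 := by
  norm_num [show cdMatrix 1 2 1 = (0 : ℂ) from rfl, kd] <;> decide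
@[simp] lemma cdE_1_2_2 : cdMatrix 1 2 2 = 0 := by
  norm_num [show cdMatrix 1 2 2 = (0 : ℂ) from rfl, kd] <;> decide
@[simp] lemma cdE_1_2_3 : cdMatrix 1 2 3 = 0 := by
  norm_num [show cdMatrix 1 2 3 = (0 : ℂ) from rfl, kd] <;> decide
@[simp] lemma cdE_1_2_4 : cdMatrix 1 2 4 = 0 := by
  norm_num [show cdMatrix 1 2 4 = (0 : ℂ) from rfl, kd] <;> decide
@[simp] lemma cdE_1_2_5 : cdMatrix 1 2 5 = 0 := by
  norm_num [show cdMatrix 1 2 5 = (0 : ℂ) from rfl, kd] <;> decide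
@[simp] lemma cdE_1_2_6 : cdMatrix 1 2 6 = 0 := by
  norm_num [show cdMatrix 1 2 6 = (0 : ℂ) from rfl, kd] <;> decide
@[simp] lemma cdE_1_2_7 : cdMatrix 1 2 7 = 0 := by
  norm_num [show cdMatrix 1 2 7 = (0 : ℂ) from rfl, kd] <;> decide
@[simp] lemma cdE_1_3_0 : cdMatrix 1 3 0 = 0 := by
  norm_num [show cdMatrix 1 3 0 = (kd 1 2 : ℂ) from rfl, kd] <;> decide
@[simp] lemma cdE_1_3_1 : cdMatrix 1 3 1 = 0 := by
  norm_num [show cdMatrix 1 3 1 = (0 : ℂ) from rfl, kd] <;> decide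
@[simp] lemma cdE_1_3_2 : cdMatrix 1 3 2 = 0 := by
  norm_num [show cdMatrix 1 3 2 = (0 : ℂ) from rfl, kd] <;> decide
@[simp] lemma cdE_1_3_3 : cdMatrix 1 3 3 = 0 := by
  norm_num [show cdMatrix 1 3 3 = (0 : ℂ) from rfl, kd] <;> decide
@[simp] lemma cdE_1_3_4 : cdMatrix 1 3 4 = 0 := by
  norm_num [show cdMatrix 1 3 4 = (0 : ℂ) from rfl, kd] <;> decide
@[simp] lemma cdE_1_3_5 : cdMatrix 1 3 5 = 0 := by
  norm_num [show cdMatrix 1 3 5 = (0 : ℂ) from rfl, kd] <;> decide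
@[simp] lemma cdE_1_3_6 : cdMatrix 1 3 6 = 0 := by
  norm_num [show cdMatrix 1 3 6 = (0 : ℂ) from rfl, kd] <;> decide
@[simp] lemma cdE_1_3_7 : cdMatrix 1 3 7 = 0 := by
  norm_num [show cdMatrix 1 3 7 = (0 : ℂ) from rfl, kd] <;> decide
@[simp] lemma cdE_1_4_0 : cdMatrix 1 4 0 = 0 := by
  norm_num [show cdMatrix 1 4 0 = (0 : ℂ) from rfl, kd] <;> decide
@[simp] lemma cdE_1_4_1 : cdMatrix 1 4 1 = 0 := by
  norm_num [show cdMatrix 1 4 1 = (-kd 1 0 : ℂ) from rfl, kd] <;> decide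
@[simp] lemma cdE_1_4_2 : cdMatrix 1 4 2 = 0 := by
  norm_num [show cdMatrix 1 4 2 = (kd 1 2 : ℂ) from rfl, kd] <;> decide
@[simp] lemma cdE_1_4_3 : cdMatrix 1 4 3 = 1 := by
  norm_num [show cdMatrix 1 4 3 = (kd 1 1 : ℂ) from rfl, kd] <;> decide
@[simp] lemma cdE_1_4_4 : cdMatrix 1 4 4 = 0 := by
  norm_num [show cdMatrix 1 4 4 = (0 : ℂ) from rfl, kd] <;> decide
@[simp] lemma cdE_1_4_5 : cdMatrix 1 4 5 = 0 := by
  norm_num [show cdMatrix 1 4 5 = (0 : ℂ) from rfl, kd] <;> decide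
@[simp] lemma cdE_1_4_6 : cdMatrix 1 4 6 = 0 := by
  norm_num [show cdMatrix 1 4 6 = (0 : ℂ) from rfl, kd] <;> decide
@[simp] lemma cdE_1_4_7 : cdMatrix 1 4 7 = 0 := by
  norm_num [show cdMatrix 1 4 7 = (0 : ℂ) from rfl, kd] <;> decide
@[simp] lemma cdE_1_5_0 : cdMatrix 1 5 0 = 0 := by
  norm_num [show cdMatrix 1 5 0 = (0 : ℂ) from rfl, kd] <;> decide
@[simp] lemma cdE_1_5_1 : cdMatrix 1 5 1 = 0 := by
  norm_num [show cdMatrix 1 5 1 = (kd 1 2 : ℂ) from rfl, kd] <;> decide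
@[simp] lemma cdE_1_5_2 : cdMatrix 1 5 2 = (-1) := by
  norm_num [show cdMatrix 1 5 2 = (-kd 1 1 : ℂ) from rfl, kd] <;> decide
@[simp] lemma cdE_1_5_3 : cdMatrix 1 5 3 = 0 := by
  norm_num [show cdMatrix 1 5 3 = (kd 1 0 : ℂ) from rfl, kd] <;> decide
@[simp] lemma cdE_1_5_4 : cdMatrix 1 5 4 = 0 := by
  norm_num [show cdMatrix 1 5 4 = (0 : ℂ) from rfl, kd] <;> decide
@[simp] lemma cdE_1_5_5 : cdMatrix 1 5 5 = 0 := by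
  norm_num [show cdMatrix 1 5 5 = (0 : ℂ) from rfl, kd] <;> decide
@[simp] lemma cdE_1_5_6 : cdMatrix 1 5 6 = 0 := by
  norm_num [show cdMatrix 1 5 6 = (0 : ℂ) from rfl, kd] <;> decide
@[simp] lemma cdE_1_5_7 : cdMatrix 1 5 7 = 0 := by
  norm_num [show cdMatrix 1 5 7 = (0 : ℂ) from rfl, kd] <;> decide
@[simp] lemma cdE_1_6_0 : cdMatrix 1 6 0 = 0 := by
  norm_num [show cdMatrix 1 6 0 = (0 : ℂ) from rfl, kd] <;> decide
@[simp] lemma cdE_1_6_1 : cdMatrix 1 6 1 = 1 := by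
  norm_num [show cdMatrix 1 6 1 = (kd 1 1 : ℂ) from rfl, kd] <;> decide
@[simp] lemma cdE_1_6_2 : cdMatrix 1 6 2 = 0 := by
  norm_num [show cdMatrix 1 6 2 = (kd 1 0 : ℂ) from rfl, kd] <;> decide
@[simp] lemma cdE_1_6_3 : cdMatrix 1 6 3 = 0 := by
  norm_num [show cdMatrix 1 6 3 = (-kd 1 2 : ℂ) from rfl, kd] <;> decide
@[simp] lemma cdE_1_6_4 : cdMatrix 1 6 4 = 0 := by
  norm_num [show cdMatrix 1 6 4 = (0 : ℂ) from rfl, kd] <;> decide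
@[simp] lemma cdE_1_6_5 : cdMatrix 1 6 5 = 0 := by
  norm_num [show cdMatrix 1 6 5 = (0 : ℂ) from rfl, kd] <;> decide
@[simp] lemma cdE_1_6_6 : cdMatrix 1 6 6 = 0 := by
  norm_num [show cdMatrix 1 6 6 = (0 : ℂ) from rfl, kd] <;> decide
@[simp] lemma cdE_1_6_7 : cdMatrix 1 6 7 = 0 := by
  norm_num [show cdMatrix 1 6 7 = (0 : ℂ) from rfl, kd] <;> decide
@[simp] lemma cdE_1_7_0 : cdMatrix 1 7 0 = 0 := by
  norm_num [show cdMatrix 1 7 0 = (0 : ℂ) from rfl, kd] <;> decide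
@[simp] lemma cdE_1_7_1 : cdMatrix 1 7 1 = 0 := by
  norm_num [show cdMatrix 1 7 1 = (0 : ℂ) from rfl, kd] <;> decide
@[simp] lemma cdE_1_7_2 : cdMatrix 1 7 2 = 0 := by
  norm_num [show cdMatrix 1 7 2 = (0 : ℂ) from rfl, kd] <;> decide
@[simp] lemma cdE_1_7_3 : cdMatrix 1 7 3 = 0 := by
  norm_num [show cdMatrix 1 7 3 = (0 : ℂ) from rfl, kd] <;> decide
@[simp] lemma cdE_1_7_4 : cdMatrix 1 7 4 = 0 := by
  norm_num [show cdMatrix 1 7 4 = (kd 1 0 : ℂ) from rfl, kd] <;> decide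
@[simp] lemma cdE_1_7_5 : cdMatrix 1 7 5 = 1 := by
  norm_num [show cdMatrix 1 7 5 = (kd 1 1 : ℂ) from rfl, kd] <;> decide
@[simp] lemma cdE_1_7_6 : cdMatrix 1 7 6 = 0 := by
  norm_num [show cdMatrix 1 7 6 = (kd 1 2 : ℂ) from rfl, kd] <;> decide
@[simp] lemma cdE_1_7_7 : cdMatrix 1 7 7 = 0 := by
  norm_num [show cdMatrix 1 7 7 = (0 : ℂ) from rfl, kd] <;> decide
@[simp] lemma cdE_2_0_0 : cdMatrix 2 0 0 = 0 := by
  norm_num [show cdMatrix 2 0 0 = (0 : ℂ) from rfl, kd] <;> decide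
@[simp] lemma cdE_2_0_1 : cdMatrix 2 0 1 = 0 := by
  norm_num [show cdMatrix 2 0 1 = (0 : ℂ) from rfl, kd] <;> decide
@[simp] lemma cdE_2_0_2 : cdMatrix 2 0 2 = 0 := by
  norm_num [show cdMatrix 2 0 2 = (0 : ℂ) from rfl, kd] <;> decide
@[simp] lemma cdE_2_0_3 : cdMatrix 2 0 3 = 0 := by
  norm_num [show cdMatrix 2 0 3 = (0 : ℂ) from rfl, kd] <;> decide
@[simp] lemma cdE_2_0_4 : cdMatrix 2 0 4 = 0 := by
  norm_num [show cdMatrix 2 0 4 = (0 : ℂ) from rfl, kd] <;> decide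
@[simp] lemma cdE_2_0_5 : cdMatrix 2 0 5 = 0 := by
  norm_num [show cdMatrix 2 0 5 = (0 : ℂ) from rfl, kd] <;> decide
@[simp] lemma cdE_2_0_6 : cdMatrix 2 0 6 = 0 := by
  norm_num [show cdMatrix 2 0 6 = (0 : ℂ) from rfl, kd] <;> decide
@[simp] lemma cdE_2_0_7 : cdMatrix 2 0 7 = 0 := by
  norm_num [show cdMatrix 2 0 7 = (0 : ℂ) from rfl, kd] <;> decide
@[simp] lemma cdE_2_1_0 : cdMatrix 2 1 0 = 0 := by
  norm_num [show cdMatrix 2 1 0 = (kd 2 0 : ℂ) from rfl, kd] <;> decide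
@[simp] lemma cdE_2_1_1 : cdMatrix 2 1 1 = 0 := by
  norm_num [show cdMatrix 2 1 1 = (0 : ℂ) from rfl, kd] <;> decide
@[simp] lemma cdE_2_1_2 : cdMatrix 2 1 2 = 0 := by
  norm_num [show cdMatrix 2 1 2 = (0 : ℂ) from rfl, kd] <;> decide
@[simp] lemma cdE_2_1_3 : cdMatrix 2 1 3 = 0 := by
  norm_num [show cdMatrix 2 1 3 = (0 : ℂ) from rfl, kd] <;> decide
@[simp] lemma cdE_2_1_4 : cdMatrix 2 1 4 = 0 := by
  norm_num [show cdMatrix 2 1 4 = (0 : ℂ) from rfl, kd] <;> decide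
@[simp] lemma cdE_2_1_5 : cdMatrix 2 1 5 = 0 := by
  norm_num [show cdMatrix 2 1 5 = (0 : ℂ) from rfl, kd] <;> decide
@[simp] lemma cdE_2_1_6 : cdMatrix 2 1 6 = 0 := by
  norm_num [show cdMatrix 2 1 6 = (0 : ℂ) from rfl, kd] <;> decide
@[simp] lemma cdE_2_1_7 : cdMatrix 2 1 7 = 0 := by
  norm_num [show cdMatrix 2 1 7 = (0 : ℂ) from rfl, kd] <;> decide
@[simp] lemma cdE_2_2_0 : cdMatrix 2 2 0 = 0 := by
  norm_num [show cdMatrix 2 2 0 = (kd 2 1 : ℂ) from rfl, kd] <;> decide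
@[simp] lemma cdE_2_2_1 : cdMatrix 2 2 1 = 0 := by
  norm_num [show cdMatrix 2 2 1 = (0 : ℂ) from rfl, kd] <;> decide
@[simp] lemma cdE_2_2_2 : cdMatrix 2 2 2 = 0 := by
  norm_num [show cdMatrix 2 2 2 = (0 : ℂ) from rfl, kd] <;> decide
@[simp] lemma cdE_2_2_3 : cdMatrix 2 2 3 = 0 := by
  norm_num [show cdMatrix 2 2 3 = (0 : ℂ) from rfl, kd] <;> decide
@[simp] lemma cdE_2_2_4 : cdMatrix 2 2 4 = 0 := by
  norm_num [show cdMatrix 2 2 4 = (0 : ℂ) from rfl, kd] <;> decide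
@[simp] lemma cdE_2_2_5 : cdMatrix 2 2 5 = 0 := by
  norm_num [show cdMatrix 2 2 5 = (0 : ℂ) from rfl, kd] <;> decide
@[simp] lemma cdE_2_2_6 : cdMatrix 2 2 6 = 0 := by
  norm_num [show cdMatrix 2 2 6 = (0 : ℂ) from rfl, kd] <;> decide
@[simp] lemma cdE_2_2_7 : cdMatrix 2 2 7 = 0 := by
  norm_num [show cdMatrix 2 2 7 = (0 : ℂ) from rfl, kd] <;> decide
@[simp] lemma cdE_2_3_0 : cdMatrix 2 3 0 = 1 := by
  norm_num [show cdMatrix 2 3 0 = (kd 2 2 : ℂ) from rfl, kd] <;> decide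
@[simp] lemma cdE_2_3_1 : cdMatrix 2 3 1 = 0 := by
  norm_num [show cdMatrix 2 3 1 = (0 : ℂ) from rfl, kd] <;> decide
@[simp] lemma cdE_2_3_2 : cdMatrix 2 3 2 = 0 := by
  norm_num [show cdMatrix 2 3 2 = (0 : ℂ) from rfl, kd] <;> decide
@[simp] lemma cdE_2_3_3 : cdMatrix 2 3 3 = 0 := by
  norm_num [show cdMatrix 2 3 3 = (0 : ℂ) from rfl, kd] <;> decide
@[simp] lemma cdE_2_3_4 : cdMatrix 2 3 4 = 0 := by
  norm_num [show cdMatrix 2 3 4 = (0 : ℂ) from rfl, kd] <;> decide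
@[simp] lemma cdE_2_3_5 : cdMatrix 2 3 5 = 0 := by
  norm_num [show cdMatrix 2 3 5 = (0 : ℂ) from rfl, kd] <;> decide
@[simp] lemma cdE_2_3_6 : cdMatrix 2 3 6 = 0 := by
  norm_num [show cdMatrix 2 3 6 = (0 : ℂ) from rfl, kd] <;> decide
@[simp] lemma cdE_2_3_7 : cdMatrix 2 3 7 = 0 := by
  norm_num [show cdMatrix 2 3 7 = (0 : ℂ) from rfl, kd] <;> decide
@[simp] lemma cdE_2_4_0 : cdMatrix 2 4 0 = 0 := by
  norm_num [show cdMatrix 2 4 0 = (0 : ℂ) from rfl, kd] <;> decide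
@[simp] lemma cdE_2_4_1 : cdMatrix 2 4 1 = 0 := by
  norm_num [show cdMatrix 2 4 1 = (-kd 2 0 : ℂ) from rfl, kd] <;> decide
@[simp] lemma cdE_2_4_2 : cdMatrix 2 4 2 = 1 := by
  norm_num [show cdMatrix 2 4 2 = (kd 2 2 : ℂ) from rfl, kd] <;> decide
@[simp] lemma cdE_2_4_3 : cdMatrix 2 4 3 = 0 := by
  norm_num [show cdMatrix 2 4 3 = (kd 2 1 : ℂ) from rfl, kd] <;> decide
@[simp] lemma cdE_2_4_4 : cdMatrix 2 4 4 = 0 := by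
  norm_num [show cdMatrix 2 4 4 = (0 : ℂ) from rfl, kd] <;> decide
@[simp] lemma cdE_2_4_5 : cdMatrix 2 4 5 = 0 := by
  norm_num [show cdMatrix 2 4 5 = (0 : ℂ) from rfl, kd] <;> decide
@[simp] lemma cdE_2_4_6 : cdMatrix 2 4 6 = 0 := by
  norm_num [show cdMatrix 2 4 6 = (0 : ℂ) from rfl, kd] <;> decide
@[simp] lemma cdE_2_4_7 : cdMatrix 2 4 7 = 0 := by
  norm_num [show cdMatrix 2 4 7 = (0 : ℂ) from rfl, kd] <;> decide
@[simp] lemma cdE_2_5_0 : cdMatrix 2 5 0 = 0 := by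
  norm_num [show cdMatrix 2 5 0 = (0 : ℂ) from rfl, kd] <;> decide
@[simp] lemma cdE_2_5_1 : cdMatrix 2 5 1 = 1 := by
  norm_num [show cdMatrix 2 5 1 = (kd 2 2 : ℂ) from rfl, kd] <;> decide
@[simp] lemma cdE_2_5_2 : cdMatrix 2 5 2 = 0 := by
  norm_num [show cdMatrix 2 5 2 = (-kd 2 1 : ℂ) from rfl, kd] <;> decide
@[simp] lemma cdE_2_5_3 : cdMatrix 2 5 3 = 0 := by
  norm_num [show cdMatrix 2 5 3 = (kd 2 0 : ℂ) from rfl, kd] <;> decide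
@[simp] lemma cdE_2_5_4 : cdMatrix 2 5 4 = 0 := by
  norm_num [show cdMatrix 2 5 4 = (0 : ℂ) from rfl, kd] <;> decide
@[simp] lemma cdE_2_5_5 : cdMatrix 2 5 5 = 0 := by
  norm_num [show cdMatrix 2 5 5 = (0 : ℂ) from rfl, kd] <;> decide
@[simp] lemma cdE_2_5_6 : cdMatrix 2 5 6 = 0 := by
  norm_num [show cdMatrix 2 5 6 = (0 : ℂ) from rfl, kd] <;> decide
@[simp] lemma cdE_2_5_7 : cdMatrix 2 5 7 = 0 := by
  norm_num [show cdMatrix 2 5 7 = (0 : ℂ) from rfl, kd] <;> decide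
@[simp] lemma cdE_2_6_0 : cdMatrix 2 6 0 = 0 := by
  norm_num [show cdMatrix 2 6 0 = (0 : ℂ) from rfl, kd] <;> decide
@[simp] lemma cdE_2_6_1 : cdMatrix 2 6 1 = 0 := by
  norm_num [show cdMatrix 2 6 1 = (kd 2 1 : ℂ) from rfl, kd] <;> decide
@[simp] lemma cdE_2_6_2 : cdMatrix 2 6 2 = 0 := by
  norm_num [show cdMatrix 2 6 2 = (kd 2 0 : ℂ) from rfl, kd] <;> decide
@[simp] lemma cdE_2_6_3 : cdMatrix 2 6 3 = (-1) := by
  norm_num [show cdMatrix 2 6 3 = (-kd 2 2 : ℂ) from rfl, kd] <;> decide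
@[simp] lemma cdE_2_6_4 : cdMatrix 2 6 4 = 0 := by
  norm_num [show cdMatrix 2 6 4 = (0 : ℂ) from rfl, kd] <;> decide
@[simp] lemma cdE_2_6_5 : cdMatrix 2 6 5 = 0 := by
  norm_num [show cdMatrix 2 6 5 = (0 : ℂ) from rfl, kd] <;> decide
@[simp] lemma cdE_2_6_6 : cdMatrix 2 6 6 = 0 := by
  norm_num [show cdMatrix 2 6 6 = (0 : ℂ) from rfl, kd] <;> decide
@[simp] lemma cdE_2_6_7 : cdMatrix 2 6 7 = 0 := by
  norm_num [show cdMatrix 2 6 7 = (0 : ℂ) from rfl, kd] <;> decide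
@[simp] lemma cdE_2_7_0 : cdMatrix 2 7 0 = 0 := by
  norm_num [show cdMatrix 2 7 0 = (0 : ℂ) from rfl, kd] <;> decide
@[simp] lemma cdE_2_7_1 : cdMatrix 2 7 1 = 0 := by
  norm_num [show cdMatrix 2 7 1 = (0 : ℂ) from rfl, kd] <;> decide
@[simp] lemma cdE_2_7_2 : cdMatrix 2 7 2 = 0 := by
  norm_num [show cdMatrix 2 7 2 = (0 : ℂ) from rfl, kd] <;> decide
@[simp] lemma cdE_2_7_3 : cdMatrix 2 7 3 = 0 := by
  norm_num [show cdMatrix 2 7 3 = (0 : ℂ) from rfl, kd] <;> decide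
@[simp] lemma cdE_2_7_4 : cdMatrix 2 7 4 = 0 := by
  norm_num [show cdMatrix 2 7 4 = (kd 2 0 : ℂ) from rfl, kd] <;> decide
@[simp] lemma cdE_2_7_5 : cdMatrix 2 7 5 = 0 := by
  norm_num [show cdMatrix 2 7 5 = (kd 2 1 : ℂ) from rfl, kd] <;> decide
@[simp] lemma cdE_2_7_6 : cdMatrix 2 7 6 = 1 := by
  norm_num [show cdMatrix 2 7 6 = (kd 2 2 : ℂ) from rfl, kd] <;> decide
@[simp] lemma cdE_2_7_7 : cdMatrix 2 7 7 = 0 := by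
  norm_num [show cdMatrix 2 7 7 = (0 : ℂ) from rfl, kd] <;> decide


/-- The Crabb–Davie operators. -/
noncomputable def cdT (i : Fin 3) : EuclideanSpace ℂ (Fin 8) →L[ℂ] EuclideanSpace ℂ (Fin 8) :=
  Matrix.toEuclideanCLM (𝕜 := ℂ) (cdMatrix i)

lemma cdT_apply (i : Fin 3) (v : EuclideanSpace ℂ (Fin 8)) (k : Fin 8) :
    cdT i v k = ∑ l, cdMatrix i k l * v l := by
  have : cdT i v = (WithLp.equiv 2 _).symm ((cdMatrix i).toLin' (WithLp.equiv 2 _ v)) := rfl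
  rw [this]
  simp [Matrix.toLin'_apply, Matrix.mulVec, dotProduct]

lemma col_0_0 : cdT 0 (EuclideanSpace.single (0:Fin 8) (1:ℂ))
    = (1:ℂ) • EuclideanSpace.single (1:Fin 8) (1:ℂ) := by
  refine PiLp.ext fun r => ?_
  rw [cdT_apply, Fin.sum_univ_eight]
  fin_cases r <;>
    simp [EuclideanSpace.single_apply]

lemma col_0_1 : cdT 0 (EuclideanSpace.single (1:Fin 8) (1:ℂ))
    = ((-1):ℂ) • EuclideanSpace.single (4:Fin 8) (1:ℂ) := by
  refine PiLp.ext fun r => ?_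
  rw [cdT_apply, Fin.sum_univ_eight]
  fin_cases r <;>
    simp [EuclideanSpace.single_apply]

lemma col_0_2 : cdT 0 (EuclideanSpace.single (2:Fin 8) (1:ℂ))
    = (1:ℂ) • EuclideanSpace.single (6:Fin 8) (1:ℂ) := by
  refine PiLp.ext fun r => ?_
  rw [cdT_apply, Fin.sum_univ_eight]
  fin_cases r <;>
    simp [EuclideanSpace.single_apply]

lemma col_0_3 : cdT 0 (EuclideanSpace.single (3:Fin 8) (1:ℂ))
    = (1:ℂ) • EuclideanSpace.single (5:Fin 8) (1:ℂ) := by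
  refine PiLp.ext fun r => ?_
  rw [cdT_apply, Fin.sum_univ_eight]
  fin_cases r <;>
    simp [EuclideanSpace.single_apply]

lemma col_0_4 : cdT 0 (EuclideanSpace.single (4:Fin 8) (1:ℂ))
    = (1:ℂ) • EuclideanSpace.single (7:Fin 8) (1:ℂ) := by
  refine PiLp.ext fun r => ?_
  rw [cdT_apply, Fin.sum_univ_eight]
  fin_cases r <;>
    simp [EuclideanSpace.single_apply]

lemma col_1_0 : cdT 1 (EuclideanSpace.single (0:Fin 8) (1:ℂ))
    = (1:ℂ) • EuclideanSpace.single (2:Fin 8) (1:ℂ) := by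
  refine PiLp.ext fun r => ?_
  rw [cdT_apply, Fin.sum_univ_eight]
  fin_cases r <;>
    simp [EuclideanSpace.single_apply]

lemma col_1_1 : cdT 1 (EuclideanSpace.single (1:Fin 8) (1:ℂ))
    = (1:ℂ) • EuclideanSpace.single (6:Fin 8) (1:ℂ) := by
  refine PiLp.ext fun r => ?_
  rw [cdT_apply, Fin.sum_univ_eight]
  fin_cases r <;>
    simp [EuclideanSpace.single_apply]

lemma col_1_2 : cdT 1 (EuclideanSpace.single (2:Fin 8) (1:ℂ))
    = ((-1):ℂ) • EuclideanSpace.single (5:Fin 8) (1:ℂ) := by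
  refine PiLp.ext fun r => ?_
  rw [cdT_apply, Fin.sum_univ_eight]
  fin_cases r <;>
    simp [EuclideanSpace.single_apply]

lemma col_1_3 : cdT 1 (EuclideanSpace.single (3:Fin 8) (1:ℂ))
    = (1:ℂ) • EuclideanSpace.single (4:Fin 8) (1:ℂ) := by
  refine PiLp.ext fun r => ?_
  rw [cdT_apply, Fin.sum_univ_eight]
  fin_cases r <;>
    simp [EuclideanSpace.single_apply]

lemma col_1_5 : cdT 1 (EuclideanSpace.single (5:Fin 8) (1:ℂ))
    = (1:ℂ) • EuclideanSpace.single (7:Fin 8) (1:ℂ) := by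
  refine PiLp.ext fun r => ?_
  rw [cdT_apply, Fin.sum_univ_eight]
  fin_cases r <;>
    simp [EuclideanSpace.single_apply]

lemma col_2_0 : cdT 2 (EuclideanSpace.single (0:Fin 8) (1:ℂ))
    = (1:ℂ) • EuclideanSpace.single (3:Fin 8) (1:ℂ) := by
  refine PiLp.ext fun r => ?_
  rw [cdT_apply, Fin.sum_univ_eight]
  fin_cases r <;>
    simp [EuclideanSpace.single_apply]

lemma col_2_1 : cdT 2 (EuclideanSpace.single (1:Fin 8) (1:ℂ))
    = (1:ℂ) • EuclideanSpace.single (5:Fin 8) (1:ℂ) := by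
  refine PiLp.ext fun r => ?_
  rw [cdT_apply, Fin.sum_univ_eight]
  fin_cases r <;>
    simp [EuclideanSpace.single_apply]

lemma col_2_2 : cdT 2 (EuclideanSpace.single (2:Fin 8) (1:ℂ))
    = (1:ℂ) • EuclideanSpace.single (4:Fin 8) (1:ℂ) := by
  refine PiLp.ext fun r => ?_
  rw [cdT_apply, Fin.sum_univ_eight]
  fin_cases r <;>
    simp [EuclideanSpace.single_apply]

lemma col_2_3 : cdT 2 (EuclideanSpace.single (3:Fin 8) (1:ℂ))
    = ((-1):ℂ) • EuclideanSpace.single (6:Fin 8) (1:ℂ) := by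
  refine PiLp.ext fun r => ?_
  rw [cdT_apply, Fin.sum_univ_eight]
  fin_cases r <;>
    simp [EuclideanSpace.single_apply]

lemma col_2_6 : cdT 2 (EuclideanSpace.single (6:Fin 8) (1:ℂ))
    = (1:ℂ) • EuclideanSpace.single (7:Fin 8) (1:ℂ) := by
  refine PiLp.ext fun r => ?_
  rw [cdT_apply, Fin.sum_univ_eight]
  fin_cases r <;>
    simp [EuclideanSpace.single_apply]



section Main

local notation "⟪" x ", " y "⟫" => inner (𝕜 := ℂ) x y

variable {M : Type*} [NormedAddCommGroup M] [InnerProductSpace ℂ M]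

/-- If the block extension of `cdT i` is a contraction and column `k` of `cdT i` is `c`
times the basis vector `e l` with `|c| = 1`, then row `l` of `A` vanishes. -/
lemma row_vanish (i : Fin 3) (A : M →L[ℂ] EuclideanSpace ℂ (Fin 8)) (B : M →L[ℂ] M)
    (hX : ‖blockOp (cdT i) A B‖ ≤ 1) (k l : Fin 8) (c : ℂ)
    (hcol : cdT i (EuclideanSpace.single k (1:ℂ)) = c • EuclideanSpace.single l (1:ℂ))
    (hc : ‖c‖ = 1) (m : M) : A m l = 0 := by
  have hh : ‖cdT i (EuclideanSpace.single k (1:ℂ))‖ = ‖EuclideanSpace.single k (1:ℂ)‖ := by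
    rw [hcol, norm_smul]
    simp [EuclideanSpace.norm_single, hc]
  have h0 := contraction_inner_zero (cdT i) A B hX _ hh m
  rw [hcol, inner_smul_left, EuclideanSpace.inner_single_left] at h0
  have hcne : starRingEnd ℂ c ≠ 0 := by
    simp only [ne_eq, map_eq_zero]
    intro h; rw [h] at hc; simp at hc
  simpa [hcne] using h0

end Main

/-- The Crabb–Davie triple, viewed as operators on the Hilbert space `ℂ⁸`, is extremal. -/
theorem statement7 :
    IsExtremal (fun i : Fin 3 => (Matrix.toEuclideanCLM (𝕜 := ℂ) (cdMatrix i) :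
      EuclideanSpace ℂ (Fin 8) →L[ℂ] EuclideanSpace ℂ (Fin 8))) := by
  intro M _ _ _ A B hc hcomm
  -- pointwise commutation identity (first component)
  have comm : ∀ (i j : Fin 3) (m : M),
      cdT i (A j m) + A i (B j m) = cdT j (A i m) + A j (B i m) := by
    intro i j m
    set v := (WithLp.equiv 2 (EuclideanSpace ℂ (Fin 8) × M)).symm
      ((0 : EuclideanSpace ℂ (Fin 8)), m) with hv
    have h0 := ContinuousLinearMap.ext_iff.mp (hcomm i j) v
    simp only [ContinuousLinearMap.comp_apply] at h0
    have h : blockOp (cdT i) (A i) (B i) (blockOp (cdT j) (A j) (B j) v)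
        = blockOp (cdT j) (A j) (B j) (blockOp (cdT i) (A i) (B i) v) := h0
    have e1 : ∀ p : Fin 3, blockOp (cdT p) (A p) (B p) v
        = (WithLp.equiv 2 _).symm (A p m, B p m) := by
      intro p; rw [hv, blockOp_apply']; simp
    rw [e1 i, e1 j, blockOp_apply', blockOp_apply'] at h
    have h2 := congrArg (fun x => (WithLp.equiv 2 ((EuclideanSpace ℂ (Fin 8)) × M)) x) h
    simp only [Equiv.apply_symm_apply] at h2
    exact congrArg Prod.fst h2
  have hc' : ∀ p : Fin 3, ‖blockOp (cdT p) (A p) (B p)‖ ≤ 1 := hc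
  -- rows killed by the contraction property
  have r0 := fun m => row_vanish 0 (A 0) (B 0) (hc' 0) 0 1 1 col_0_0 (by simp) m
  have r1 := fun m => row_vanish 0 (A 0) (B 0) (hc' 0) 1 4 (-1) col_0_1 (by simp) m
  have r2 := fun m => row_vanish 0 (A 0) (B 0) (hc' 0) 2 6 1 col_0_2 (by simp) m
  have r3 := fun m => row_vanish 0 (A 0) (B 0) (hc' 0) 3 5 1 col_0_3 (by simp) m
  have r4 := fun m => row_vanish 0 (A 0) (B 0) (hc' 0) 4 7 1 col_0_4 (by simp) m
  have s0 := fun m => row_vanish 1 (A 1) (B 1) (hc' 1) 0 2 1 col_1_0 (by simp) m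
  have s1 := fun m => row_vanish 1 (A 1) (B 1) (hc' 1) 1 6 1 col_1_1 (by simp) m
  have s2 := fun m => row_vanish 1 (A 1) (B 1) (hc' 1) 2 5 (-1) col_1_2 (by simp) m
  have s3 := fun m => row_vanish 1 (A 1) (B 1) (hc' 1) 3 4 1 col_1_3 (by simp) m
  have s4 := fun m => row_vanish 1 (A 1) (B 1) (hc' 1) 5 7 1 col_1_5 (by simp) m
  have t0 := fun m => row_vanish 2 (A 2) (B 2) (hc' 2) 0 3 1 col_2_0 (by simp) m
  have t1 := fun m => row_vanish 2 (A 2) (B 2) (hc' 2) 1 5 1 col_2_1 (by simp) m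
  have t2 := fun m => row_vanish 2 (A 2) (B 2) (hc' 2) 2 4 1 col_2_2 (by simp) m
  have t3 := fun m => row_vanish 2 (A 2) (B 2) (hc' 2) 3 6 (-1) col_2_3 (by simp) m
  have t4 := fun m => row_vanish 2 (A 2) (B 2) (hc' 2) 6 7 1 col_2_6 (by simp) m
  -- scalar commutation equations
  have E : ∀ (i j : Fin 3) (k : Fin 8) (m : M),
      cdT i (A j m) k + A i (B j m) k = cdT j (A i m) k + A j (B i m) k := by
    intro i j k m
    have := congrArg (fun v : EuclideanSpace ℂ (Fin 8) => v k) (comm i j m)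
    simpa [PiLp.add_apply] using this
  have e014 : ∀ m : M, -(A 1 m 1) = A 0 m 3 := by
    intro m
    have h := E 0 1 4 m
    rw [cdT_apply, cdT_apply, Fin.sum_univ_eight, Fin.sum_univ_eight] at h
    simp only [cdE_0_4_0, cdE_0_4_1, cdE_0_4_2, cdE_0_4_3, cdE_0_4_4, cdE_0_4_5, cdE_0_4_6,
      cdE_0_4_7, cdE_1_4_0, cdE_1_4_1, cdE_1_4_2, cdE_1_4_3, cdE_1_4_4, cdE_1_4_5, cdE_1_4_6,
      cdE_1_4_7, r1 (B 1 m), s3 (B 0 m)] at h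
    linear_combination h
  have e125 : ∀ m : M, -(A 2 m 2) = A 1 m 1 := by
    intro m
    have h := E 1 2 5 m
    rw [cdT_apply, cdT_apply, Fin.sum_univ_eight, Fin.sum_univ_eight] at h
    simp only [cdE_1_5_0, cdE_1_5_1, cdE_1_5_2, cdE_1_5_3, cdE_1_5_4, cdE_1_5_5, cdE_1_5_6,
      cdE_1_5_7, cdE_2_5_0, cdE_2_5_1, cdE_2_5_2, cdE_2_5_3, cdE_2_5_4, cdE_2_5_5, cdE_2_5_6,
      cdE_2_5_7, s2 (B 2 m), t1 (B 1 m)] at h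
    linear_combination h
  have e026 : ∀ m : M, A 2 m 2 = -(A 0 m 3) := by
    intro m
    have h := E 0 2 6 m
    rw [cdT_apply, cdT_apply, Fin.sum_univ_eight, Fin.sum_univ_eight] at h
    simp only [cdE_0_6_0, cdE_0_6_1, cdE_0_6_2, cdE_0_6_3, cdE_0_6_4, cdE_0_6_5, cdE_0_6_6,
      cdE_0_6_7, cdE_2_6_0, cdE_2_6_1, cdE_2_6_2, cdE_2_6_3, cdE_2_6_4, cdE_2_6_5, cdE_2_6_6,
      cdE_2_6_7, r2 (B 2 m), t3 (B 0 m)] at h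
    linear_combination h
  have e024 : ∀ m : M, -(A 2 m 1) = A 0 m 2 := by
    intro m
    have h := E 0 2 4 m
    rw [cdT_apply, cdT_apply, Fin.sum_univ_eight, Fin.sum_univ_eight] at h
    simp only [cdE_0_4_0, cdE_0_4_1, cdE_0_4_2, cdE_0_4_3, cdE_0_4_4, cdE_0_4_5, cdE_0_4_6,
      cdE_0_4_7, cdE_2_4_0, cdE_2_4_1, cdE_2_4_2, cdE_2_4_3, cdE_2_4_4, cdE_2_4_5, cdE_2_4_6,
      cdE_2_4_7, r1 (B 2 m), t2 (B 0 m)] at h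
    linear_combination h
  have e126 : ∀ m : M, A 2 m 1 = -(A 1 m 3) := by
    intro m
    have h := E 1 2 6 m
    rw [cdT_apply, cdT_apply, Fin.sum_univ_eight, Fin.sum_univ_eight] at h
    simp only [cdE_1_6_0, cdE_1_6_1, cdE_1_6_2, cdE_1_6_3, cdE_1_6_4, cdE_1_6_5, cdE_1_6_6,
      cdE_1_6_7, cdE_2_6_0, cdE_2_6_1, cdE_2_6_2, cdE_2_6_3, cdE_2_6_4, cdE_2_6_5, cdE_2_6_6,
      cdE_2_6_7, s1 (B 2 m), t3 (B 1 m)] at h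
    linear_combination h
  have e015 : ∀ m : M, A 1 m 3 = -(A 0 m 2) := by
    intro m
    have h := E 0 1 5 m
    rw [cdT_apply, cdT_apply, Fin.sum_univ_eight, Fin.sum_univ_eight] at h
    simp only [cdE_0_5_0, cdE_0_5_1, cdE_0_5_2, cdE_0_5_3, cdE_0_5_4, cdE_0_5_5, cdE_0_5_6,
      cdE_0_5_7, cdE_1_5_0, cdE_1_5_1, cdE_1_5_2, cdE_1_5_3, cdE_1_5_4, cdE_1_5_5, cdE_1_5_6,
      cdE_1_5_7, r3 (B 1 m), s2 (B 0 m)] at h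
    linear_combination h
  -- rows 1,2,3 all vanish
  have hA03 : ∀ m : M, A 0 m 3 = 0 := by
    intro m
    have h1 := e014 m; have h2 := e125 m; have h3 := e026 m
    linear_combination (-h1 + h2 + h3) / 2
  have hA11 : ∀ m : M, A 1 m 1 = 0 := by
    intro m; have := e014 m; rw [hA03 m] at this; linear_combination -this
  have hA22 : ∀ m : M, A 2 m 2 = 0 := by
    intro m; have := e125 m; rw [hA11 m] at this; linear_combination -this
  have hA02 : ∀ m : M, A 0 m 2 = 0 := by
    intro m
    have h1 := e024 m; have h2 := e126 m; have h3 := e015 m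
    linear_combination (-h1 - h2 + h3) / 2
  have hA21 : ∀ m : M, A 2 m 1 = 0 := by
    intro m; have := e024 m; rw [hA02 m] at this; linear_combination -this
  have hA13 : ∀ m : M, A 1 m 3 = 0 := by
    intro m; have := e015 m; rw [hA02 m] at this; linear_combination this
  -- row 0
  have hA00 : ∀ m : M, A 0 m 0 = 0 := by
    intro m
    have h := E 1 0 2 m
    rw [cdT_apply, cdT_apply, Fin.sum_univ_eight, Fin.sum_univ_eight] at h
    simp only [cdE_1_2_0, cdE_1_2_1, cdE_1_2_2, cdE_1_2_3, cdE_1_2_4, cdE_1_2_5, cdE_1_2_6,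
      cdE_1_2_7, cdE_0_2_0, cdE_0_2_1, cdE_0_2_2, cdE_0_2_3, cdE_0_2_4, cdE_0_2_5, cdE_0_2_6,
      cdE_0_2_7, s0 (B 0 m), hA02 (B 1 m)] at h
    linear_combination h
  have hA10 : ∀ m : M, A 1 m 0 = 0 := by
    intro m
    have h := E 0 1 1 m
    rw [cdT_apply, cdT_apply, Fin.sum_univ_eight, Fin.sum_univ_eight] at h
    simp only [cdE_0_1_0, cdE_0_1_1, cdE_0_1_2, cdE_0_1_3, cdE_0_1_4, cdE_0_1_5, cdE_0_1_6,
      cdE_0_1_7, cdE_1_1_0, cdE_1_1_1, cdE_1_1_2, cdE_1_1_3, cdE_1_1_4, cdE_1_1_5, cdE_1_1_6,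
      cdE_1_1_7, r0 (B 1 m), hA11 (B 0 m)] at h
    linear_combination h
  have hA20 : ∀ m : M, A 2 m 0 = 0 := by
    intro m
    have h := E 0 2 1 m
    rw [cdT_apply, cdT_apply, Fin.sum_univ_eight, Fin.sum_univ_eight] at h
    simp only [cdE_0_1_0, cdE_0_1_1, cdE_0_1_2, cdE_0_1_3, cdE_0_1_4, cdE_0_1_5, cdE_0_1_6,
      cdE_0_1_7, cdE_2_1_0, cdE_2_1_1, cdE_2_1_2, cdE_2_1_3, cdE_2_1_4, cdE_2_1_5, cdE_2_1_6,
      cdE_2_1_7, r0 (B 2 m), hA21 (B 0 m)] at h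
    linear_combination h
  -- conclude
  have final : ∀ (i : Fin 3) (m : M) (k : Fin 8), A i m k = 0 := by
    intro i m k
    fin_cases i <;> fin_cases k <;>
      first
      | exact hA00 m | exact hA10 m | exact hA20 m
      | exact r0 m | exact r1 m | exact r2 m | exact r3 m | exact r4 m
      | exact s0 m | exact s1 m | exact s2 m | exact s3 m | exact s4 m
      | exact t0 m | exact t1 m | exact t2 m | exact t3 m | exact t4 m
      | exact hA02 m | exact hA03 m | exact hA11 m | exact hA13 m
      | exact hA21 m | exact hA22 m
  intro i
  refine ContinuousLinearMap.ext fun m => ?_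
  have : ∀ k, A i m k = 0 := final i m
  exact PiLp.ext this
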